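/- Consider the MV-CUCB gating rule: at time t, a regular arm is played only if (t−1)·MV_{t−1} − 2 ≥ (1−α)·MV0·t, where MV_{t−1} is the empirical mean-variance of the algorithm's reward sequence up to time t−1; otherwise the default arm (constant reward μ0, MV0 = ρ·μ0) is played. Assume all rewards lie in [0,1], ρ ≥ 0, and α·MV0 > 2. Then for every t ≥ 1, MV_t ≥ (1−α)·MV0. -/

import Mathlib

theorem stmt_17 (α μ0 ρ MV0 : ℝ) (hα : α ∈ Set.Ioo (0 : ℝ) 1)
    (hμ0 : μ0 ∈ Set.Ioc (0 : ℝ) 1) (hρ : 0 ≤ ρ) (hMV0 : MV0 = ρ * μ0)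
    (hbudget : 2 < α * MV0)
    (reward : ℕ → ℝ) (hr : ∀ t, reward t ∈ Set.Icc (0 : ℝ) 1)
    (regular : ℕ → Bool)
    (μhat MV : ℕ → ℝ)
    (hμhat : ∀ t, μhat t = (∑ s ∈ Finset.Icc 1 t, reward s) / t)
    (hMV : ∀ t, MV t = ρ * μhat t - (∑ s ∈ Finset.Icc 1 t, (reward s - μhat t) ^ 2) / t)
    (hgate : ∀ t, 1 ≤ t → regular t = true →
      ((t : ℝ) - 1) * MV (t - 1) - 2 ≥ (1 - α) * MV0 * t)
    (hdef : ∀ t, regular t = false → reward t = μ0) :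
    ∀ t, 1 ≤ t → MV t ≥ (1 - α) * MV0 := by
  obtain ⟨hα0, hα1⟩ := hα
  obtain ⟨hμ00, hμ01⟩ := hμ0
  have hMV0pos : 0 < MV0 := by nlinarith
  set S : ℕ → ℝ := fun t => ∑ s ∈ Finset.Icc 1 t, reward s with hSdef
  set R : ℕ → ℝ := fun t => ∑ s ∈ Finset.Icc 1 t, (reward s) ^ 2 with hRdef
  have hS0 : ∀ t, 0 ≤ S t := fun t =>
    Finset.sum_nonneg (fun s _ => (hr s).1)
  have hS1 : ∀ t, S t ≤ t := by
    intro t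
    calc S t ≤ ∑ s ∈ Finset.Icc 1 t, (1:ℝ) :=
          Finset.sum_le_sum (fun s _ => (hr s).2)
      _ = t := by simp [Nat.card_Icc]
  have hcard : ∀ t : ℕ, (Finset.Icc 1 t).card = t := by
    intro t; simp [Nat.card_Icc]
  have hMVmul : ∀ t : ℕ, 1 ≤ t →
      (t : ℝ) * MV t = ρ * S t - R t + (S t) ^ 2 / t := by
    intro t ht
    have htpos : (0:ℝ) < t := by exact_mod_cast ht
    have htne : (t:ℝ) ≠ 0 := ne_of_gt htpos
    rw [hMV, hμhat]
    have hsum : ∑ s ∈ Finset.Icc 1 t, (reward s - S t / t) ^ 2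
        = R t - 2 * (S t / t) * S t + t * (S t / t) ^ 2 := by
      have : ∀ s ∈ Finset.Icc 1 t, (reward s - S t / t) ^ 2
          = (reward s) ^ 2 - 2 * (S t / t) * reward s + (S t / t) ^ 2 := by
        intro s _; ring
      rw [Finset.sum_congr rfl this]
      rw [Finset.sum_add_distrib, Finset.sum_sub_distrib, ← Finset.mul_sum,
        Finset.sum_const, hcard, nsmul_eq_mul]
    simp only [hSdef] at hsum ⊢
    rw [hsum]
    field_simp
    ring
  have hSsucc : ∀ n : ℕ, S (n + 1) = S n + reward (n + 1) := by
    intro n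
    simp only [hSdef]
    rw [Finset.sum_Icc_succ_top (by omega : 1 ≤ n + 1)]
  have hRsucc : ∀ n : ℕ, R (n + 1) = R n + (reward (n + 1)) ^ 2 := by
    intro n
    simp only [hRdef]
    rw [Finset.sum_Icc_succ_top (by omega : 1 ≤ n + 1)]
  -- the drop bound: for n ≥ 1,
  -- (n+1)*MV(n+1) ≥ n*MV n + ρ*reward(n+1) - 1
  have hdrop : ∀ n : ℕ, 1 ≤ n →
      ((n:ℝ) + 1) * MV (n + 1) ≥ (n:ℝ) * MV n + ρ * reward (n + 1) - 1 := by
    intro n hn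
    have hnpos : (0:ℝ) < n := by exact_mod_cast hn
    have h1 := hMVmul n hn
    have h2 := hMVmul (n + 1) (by omega)
    push_cast at h2
    rw [hSsucc, hRsucc] at h2
    set r := reward (n + 1) with hrdef
    have hr0 : 0 ≤ r := (hr (n + 1)).1
    have hr1 : r ≤ 1 := (hr (n + 1)).2
    have hs0 := hS0 n
    have hs1 := hS1 n
    -- key: r^2 + (S n)^2/n - (S n + r)^2/(n+1) ≤ 1
    have hkey : r ^ 2 + (S n) ^ 2 / n - (S n + r) ^ 2 / (n + 1) ≤ 1 := by
      have hn1 : (0:ℝ) < (n:ℝ) + 1 := by linarith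
      have heq : r ^ 2 + (S n) ^ 2 / n - (S n + r) ^ 2 / (n + 1)
          = ((n:ℝ) * r - S n) ^ 2 / ((n:ℝ) * ((n:ℝ) + 1)) := by
        field_simp
        ring
      rw [heq, div_le_one (by positivity)]
      nlinarith [mul_nonneg (sub_nonneg.2 hs1) (mul_nonneg hnpos.le (sub_nonneg.2 hr1)),
        mul_nonneg hs0 (mul_nonneg hnpos.le hr0),
        mul_nonneg hs0 hnpos.le]
    have := hkey
    nlinarith [hkey, h1, h2]
  have key : ∀ t : ℕ, 1 ≤ t → (t : ℝ) * MV t ≥ (1 - α) * MV0 * t := by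
    intro t ht
    induction t with
    | zero => omega
    | succ n ih =>
      rcases Nat.eq_zero_or_pos n with hn0 | hn1
      · -- base case t = 1
        subst hn0
        cases hreg : regular 1 with
        | true =>
          have := hgate 1 (by omega) hreg
          norm_num at this
          have hpos : 0 < (1 - α) * MV0 := mul_pos (by linarith) hMV0pos
          push_cast
          nlinarith [hpos, this]
        | false =>
          have hr1 : reward 1 = μ0 := hdef 1 hreg
          have h1 := hMVmul 1 (by omega)
          have hS1' : S 1 = μ0 := by simp [hSdef, hr1]
          have hR1' : R 1 = μ0 ^ 2 := by simp [hRdef, hr1]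
          push_cast at h1
          rw [hS1', hR1'] at h1
          have : MV 1 = ρ * μ0 := by linarith [h1]
          push_cast
          rw [this, ← hMV0]
          nlinarith
      · -- inductive step, n ≥ 1
        have ihn := ih hn1
        have hd := hdrop n hn1
        push_cast
        cases hreg : regular (n + 1) with
        | true =>
          have hg := hgate (n + 1) (by omega) hreg
          have hnn : n + 1 - 1 = n := by omega
          rw [hnn] at hg
          push_cast at hg
          have hrr : 0 ≤ ρ * reward (n + 1) := mul_nonneg hρ (hr (n + 1)).1
          linarith
        | false =>
          have hrd : reward (n + 1) = μ0 := hdef (n + 1) hreg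
          rw [hrd, ← hMV0] at hd
          nlinarith [ihn, hd]
  intro t ht
  have h := key t ht
  have htpos : (0:ℝ) < t := by exact_mod_cast ht
  have := (mul_le_mul_iff_of_pos_right htpos).mp (by linarith [h] : (1 - α) * MV0 * t ≤ MV t * t)
  linarith
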